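/- Let γ > 1, g > 0, t₁ ∈ (0,1), p₁ > 0, and let q : [0,1] → ℝ be continuous with q(y) > 0 for all y ∈ [0,1]. Then there exist differentiable functions t, p : [0,1] → ℝ such that t(1) = t₁, p(1) = p₁, 0 < t(y) < 1 and p(y) > 0 for all y ∈ [0,1], and for every y ∈ [0,1] (with one-sided derivatives at the endpoints): t'(y) = −(g/q(y)²)·((γ−1)/4)·(1 − γ − 2t(y) + (γ+1)²/(γ−1+2t(y))) and p'(y) = −γ·g·p(y)/(t(y)·q(y)²). -/

import Mathlib

open Real Set

/-- Existence of the special normal shock ODE system solution: there exist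
`t, p : [0,1] → ℝ` with `t(1) = t₁`, `p(1) = p₁`, `0 < t < 1`, `p > 0`, solving
`t' = −(g/q²)·((γ−1)/4)·(1 − γ − 2t + (γ+1)²/(γ−1+2t))` and
`p' = −γgp/(tq²)` on `[0,1]` (one-sided derivatives at the endpoints). -/
theorem special_shock_ode_existence
    (γ g t₁ p₁ : ℝ) (q : ℝ → ℝ) (hγ : 1 < γ) (hg : 0 < g)
    (ht₁ : t₁ ∈ Set.Ioo (0 : ℝ) 1) (hp₁ : 0 < p₁)
    (hqc : ContinuousOn q (Set.Icc 0 1))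
    (hqpos : ∀ y ∈ Set.Icc (0 : ℝ) 1, 0 < q y) :
    ∃ t p : ℝ → ℝ,
      t 1 = t₁ ∧ p 1 = p₁ ∧
      (∀ y ∈ Set.Icc (0 : ℝ) 1, 0 < t y ∧ t y < 1 ∧ 0 < p y) ∧
      (∀ y ∈ Set.Icc (0 : ℝ) 1,
        HasDerivWithinAt t
          (-(g / q y ^ 2) * ((γ - 1) / 4) *
            (1 - γ - 2 * t y + (γ + 1) ^ 2 / (γ - 1 + 2 * t y)))
          (Set.Icc 0 1) y ∧
        HasDerivWithinAt p (-(γ * g * p y / (t y * q y ^ 2))) (Set.Icc 0 1) y) := by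
  classical
  obtain ⟨ht₁0, ht₁1⟩ := ht₁
  have h01 : (0:ℝ) ≤ 1 := zero_le_one
  -- extend q continuously to all of ℝ
  set Q : ℝ → ℝ := Set.IccExtend h01 ((Set.Icc (0:ℝ) 1).restrict q) with hQdef
  have hQc : Continuous Q := (ContinuousOn.restrict hqc).Icc_extend'
  have hQeq : ∀ y ∈ Set.Icc (0:ℝ) 1, Q y = q y := by
    intro y hy
    simp [hQdef, Set.IccExtend_of_mem h01 _ hy, Set.restrict_apply]
    rfl
  have hQpos : ∀ y, 0 < Q y := by
    intro y
    exact hqpos _ (Set.projIcc 0 1 h01 y).2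
  -- the function H = g / Q²
  set H : ℝ → ℝ := fun y => g / Q y ^ 2 with hHdef
  have hHpos : ∀ y, 0 < H y := fun y => div_pos hg (pow_pos (hQpos y) 2)
  have hHc : Continuous H :=
    continuous_const.div (hQc.pow 2) (fun y => (pow_pos (hQpos y) 2).ne')
  -- S(y) = ∫_1^y H
  set S : ℝ → ℝ := fun y => ∫ s in (1:ℝ)..y, H s with hSdef
  have hSd : ∀ y, HasDerivAt S (H y) y := by
    intro y
    exact intervalIntegral.integral_hasDerivAt_right (hHc.intervalIntegrable 1 y)
      (hHc.stronglyMeasurableAtFilter _ _) hHc.continuousAt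
  have hScont : Continuous S := by
    rw [continuous_iff_continuousAt]; exact fun y => (hSd y).continuousAt
  have hSnonpos : ∀ y ∈ Set.Icc (0:ℝ) 1, S y ≤ 0 := by
    intro y hy
    rw [hSdef]
    simp only
    rw [intervalIntegral.integral_symm]
    have hnn : 0 ≤ ∫ s in y..(1:ℝ), H s :=
      intervalIntegral.integral_nonneg hy.2 (fun x _ => (hHpos x).le)
    linarith
  have hS1 : S 1 = 0 := by simp [hSdef]
  -- constants
  set c : ℝ := (γ+1)^2 - (γ-1+2*t₁)^2 with hcdef
  have hc0 : 0 < c := by nlinarith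
  have hc4 : c < 4*γ := by nlinarith
  -- E, v, t
  set E : ℝ → ℝ := fun y => Real.exp ((γ-1) * S y) with hEdef
  have hE0 : ∀ y, 0 < E y := fun y => Real.exp_pos _
  have hE1 : ∀ y ∈ Set.Icc (0:ℝ) 1, E y ≤ 1 := by
    intro y hy
    rw [hEdef]
    simp only
    rw [Real.exp_le_one_iff]
    have := hSnonpos y hy
    nlinarith
  set v : ℝ → ℝ := fun y => (γ+1)^2 - c * E y with hvdef
  have hvc : Continuous v :=
    continuous_const.sub (continuous_const.mul ((continuous_const.mul hScont).rexp))
  have hv_lb : ∀ y ∈ Set.Icc (0:ℝ) 1, (γ-1)^2 < v y := by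
    intro y hy
    have h1 := hE1 y hy
    have h2 := hE0 y
    have : c * E y ≤ c := by nlinarith
    simp only [hvdef]
    nlinarith
  have hv_ub : ∀ y ∈ Set.Icc (0:ℝ) 1, v y < (γ+1)^2 := by
    intro y hy
    have h2 := hE0 y
    simp only [hvdef]
    nlinarith
  have hv0 : ∀ y ∈ Set.Icc (0:ℝ) 1, 0 < v y := by
    intro y hy
    have := hv_lb y hy
    nlinarith
  set t : ℝ → ℝ := fun y => (Real.sqrt (v y) - (γ-1))/2 with htdef
  have htc : Continuous t :=
    ((Real.continuous_sqrt.comp hvc).sub continuous_const).div_const 2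
  have hsq_lb : ∀ y ∈ Set.Icc (0:ℝ) 1, γ - 1 < Real.sqrt (v y) := by
    intro y hy
    rw [Real.lt_sqrt (by linarith)]
    exact hv_lb y hy
  have hsq_ub : ∀ y ∈ Set.Icc (0:ℝ) 1, Real.sqrt (v y) < γ + 1 := by
    intro y hy
    rw [Real.sqrt_lt' (by linarith)]
    exact hv_ub y hy
  have ht_pos : ∀ y ∈ Set.Icc (0:ℝ) 1, 0 < t y := by
    intro y hy
    have := hsq_lb y hy
    simp only [htdef]
    linarith
  have ht_lt1 : ∀ y ∈ Set.Icc (0:ℝ) 1, t y < 1 := by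
    intro y hy
    have := hsq_ub y hy
    simp only [htdef]
    linarith
  -- the pressure: G = γ g / (t Q²), R = ∫_1^y G, p = p₁ exp(-R)
  set G : ℝ → ℝ := fun y => γ * g / (t y * Q y ^ 2) with hGdef
  have hGm : Measurable G :=
    measurable_const.div ((htc.measurable).mul ((hQc.pow 2).measurable))
  have hGcont : ∀ y ∈ Set.Icc (0:ℝ) 1, ContinuousAt G y := by
    intro y hy
    refine ContinuousAt.div continuousAt_const
      ((htc.continuousAt).mul ((hQc.pow 2).continuousAt)) ?_
    exact mul_ne_zero (ht_pos y hy).ne' (pow_pos (hQpos y) 2).ne'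
  have hGint : ∀ y ∈ Set.Icc (0:ℝ) 1, IntervalIntegrable G MeasureTheory.volume 1 y := by
    intro y hy
    apply ContinuousOn.intervalIntegrable
    intro x hx
    have hx' : x ∈ Set.Icc (0:ℝ) 1 :=
      Set.uIcc_subset_Icc (Set.right_mem_Icc.2 h01) hy hx
    exact ((hGcont x hx').continuousWithinAt)
  set R : ℝ → ℝ := fun y => ∫ s in (1:ℝ)..y, G s with hRdef
  have hRd : ∀ y ∈ Set.Icc (0:ℝ) 1, HasDerivAt R (G y) y := by
    intro y hy
    exact intervalIntegral.integral_hasDerivAt_right (hGint y hy)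
      (hGm.stronglyMeasurable.stronglyMeasurableAtFilter) (hGcont y hy)
  set p : ℝ → ℝ := fun y => p₁ * Real.exp (-R y) with hpdef
  refine ⟨t, p, ?_, ?_, ?_, ?_⟩
  · -- t 1 = t₁
    have hv1 : v 1 = (γ-1+2*t₁)^2 := by
      simp [hvdef, hEdef, hS1, hcdef]
    simp only [htdef, hv1]
    rw [Real.sqrt_sq (by linarith)]
    ring
  · -- p 1 = p₁
    simp [hpdef, hRdef]
  · intro y hy
    exact ⟨ht_pos y hy, ht_lt1 y hy,
      mul_pos hp₁ (Real.exp_pos _)⟩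
  · intro y hy
    have hqy : q y = Q y := (hQeq y hy).symm
    have hq0 : Q y ≠ 0 := (hQpos y).ne'
    constructor
    · -- derivative of t
      have hEd : HasDerivAt E (E y * ((γ-1) * H y)) y := ((hSd y).const_mul (γ-1)).exp
      have hvd : HasDerivAt v (-(c * (E y * ((γ-1) * H y)))) y := by
        simpa using ((hEd.const_mul c).const_sub ((γ+1)^2))
      have hsd : HasDerivAt (fun z => Real.sqrt (v z))
          (1 / (2 * Real.sqrt (v y)) * -(c * (E y * ((γ-1) * H y)))) y :=
        (Real.hasDerivAt_sqrt (hv0 y hy).ne').comp y hvd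
      have htd : HasDerivAt t
          ((1 / (2 * Real.sqrt (v y)) * -(c * (E y * ((γ-1) * H y))))/2) y :=
        (hsd.sub_const (γ-1)).div_const 2
      have hw : Real.sqrt (v y) = γ - 1 + 2 * t y := by
        simp only [htdef]; ring
      have hw0 : γ - 1 + 2 * t y ≠ 0 := by
        have := ht_pos y hy; nlinarith
      have hcE : c * E y = (γ+1)^2 - (γ - 1 + 2 * t y)^2 := by
        have : v y = (γ - 1 + 2 * t y)^2 := by
          rw [← hw]; exact (Real.sq_sqrt (hv0 y hy).le).symm
        simp only [hvdef] at this ⊢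
        linarith
      have hEy : E y = ((γ+1)^2 - (γ - 1 + 2 * t y)^2)/c := by
        field_simp at hcE ⊢
        linarith
      have : HasDerivAt t
          (-(g / q y ^ 2) * ((γ - 1) / 4) *
            (1 - γ - 2 * t y + (γ + 1) ^ 2 / (γ - 1 + 2 * t y))) y := by
        convert htd using 1
        rw [hw, hEy, hqy, hHdef]
        field_simp
        ring
      exact this.hasDerivWithinAt
    · -- derivative of p
      have hpd : HasDerivAt p (p₁ * Real.exp (-R y) * (-G y)) y := by
        have h1 : HasDerivAt (fun z => -R z) (-G y) y := (hRd y hy).neg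
        have h2 : HasDerivAt (fun z => Real.exp (-R z)) (Real.exp (-R y) * (-G y)) y := h1.exp
        simpa [hpdef, mul_assoc] using h2.const_mul p₁
      have : HasDerivAt p (-(γ * g * p y / (t y * q y ^ 2))) y := by
        convert hpd using 1
        have ht0 : t y ≠ 0 := (ht_pos y hy).ne'
        simp only [hpdef, hGdef]
        rw [hqy]
        field_simp
      exact this.hasDerivWithinAt
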